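/- The sequence c(k)^{1/k} tends to 4 as k tends to infinity, where the k-th root is taken in the real numbers. -/

import Mathlib

/-- The recursively defined function `t(k,r)`: `t(k,r) = 0` if `r = 0` or `r > k`,
`t(1,1) = 1`, and `t(k,r) = ∑_{s=1}^k t(k-r,s) * C(2s-1, r-1)` otherwise. -/
def trec : ℕ → ℕ → ℕ
  | k, r =>
    if _h : r = 0 ∨ k < r then 0
    else if k = 1 then (if r = 1 then 1 else 0)
    else ∑ s ∈ Finset.Icc 1 k, trec (k - r) s * Nat.choose (2 * s - 1) (r - 1)
  termination_by k _ => k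
  decreasing_by
    push_neg at _h
    omega

/-- The constant `c(k) = ∑_{r=1}^k t(k,r)/r`. -/
def cconst (k : ℕ) : ℚ := ∑ r ∈ Finset.Icc 1 k, (trec k r : ℚ) / r


open Finset

lemma trec_zero (k r : ℕ) (h : r = 0 ∨ k < r) : trec k r = 0 := by
  rw [trec, dif_pos h]

lemma trec_one_one : trec 1 1 = 1 := by rw [trec]; norm_num

lemma trec_eq_sum (k r : ℕ) (h2 : 2 ≤ k) (h1 : 1 ≤ r) (hrk : r ≤ k) :
    trec k r = ∑ s ∈ Finset.Icc 1 k, trec (k - r) s * Nat.choose (2 * s - 1) (r - 1) := by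
  rw [trec, dif_neg (by omega), if_neg (by omega)]

-- partial sums of Pascal rows
lemma pascal_partial (M j : ℕ) :
    ∑ i ∈ range (j + 1), Nat.choose (M + 1) i + Nat.choose M j
      = 2 * ∑ i ∈ range (j + 1), Nat.choose M i := by
  induction j with
  | zero => simp
  | succ j ih =>
    rw [Finset.sum_range_succ, Finset.sum_range_succ (f := fun i => Nat.choose M i),
      Nat.choose_succ_succ' M j]
    omega

lemma sum_choose_two_pow (j N : ℕ) :
    ∑ n ∈ range (N + 1), Nat.choose n j * 2 ^ (N - n)
      + ∑ i ∈ range (j + 1), Nat.choose (N + 1) i = 2 ^ (N + 1) := by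
  induction N with
  | zero =>
    rcases Nat.eq_zero_or_pos j with rfl | hj
    · simp
    · rw [show ∑ n ∈ range 1, Nat.choose n j * 2 ^ (0 - n) = 0 by
        simp [Nat.choose_eq_zero_of_lt hj]]
      rw [← Nat.sum_range_choose 1]
      rw [zero_add]
      refine (Finset.sum_subset ?_ ?_).symm
      · intro x hx; simp at hx ⊢; omega
      · intro x hx hnx; simp at hx hnx; exact Nat.choose_eq_zero_of_lt (by omega)
  | succ N ih =>
    have h1 : ∑ n ∈ range (N + 2), Nat.choose n j * 2 ^ (N + 1 - n)
        = 2 * ∑ n ∈ range (N + 1), Nat.choose n j * 2 ^ (N - n) + Nat.choose (N + 1) j := by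
      rw [Finset.sum_range_succ, Finset.mul_sum]
      congr 1
      · refine Finset.sum_congr rfl fun n hn => ?_
        simp only [Finset.mem_range] at hn
        rw [show N + 1 - n = (N - n) + 1 by omega, pow_succ]
        ring
      · simp
    rw [h1]
    have h2 := pascal_partial (N + 1) j
    omega

lemma key_ineq (m j : ℕ) :
    ∑ s ∈ Icc 1 m, Nat.choose (2 * s - 1) j * 4 ^ (m - s) ≤ 4 ^ m := by
  rcases Nat.eq_zero_or_pos m with rfl | hm
  · simp
  have key : ∀ N, ∑ n ∈ range (N + 1), Nat.choose n j * 2 ^ (N - n) ≤ 2 ^ (N + 1) := by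
    intro N
    have := sum_choose_two_pow j N
    omega
  calc ∑ s ∈ Icc 1 m, Nat.choose (2 * s - 1) j * 4 ^ (m - s)
      = ∑ s ∈ Icc 1 m, Nat.choose (2 * s - 1) j * 2 ^ (2 * m - 1 - (2 * s - 1)) := by
        refine Finset.sum_congr rfl fun s hs => ?_
        simp only [Finset.mem_Icc] at hs
        rw [show (4:ℕ) = 2 ^ 2 from rfl, ← pow_mul,
          show 2 * (m - s) = 2 * m - 1 - (2 * s - 1) by omega]
    _ = ∑ n ∈ (Icc 1 m).image (fun s => 2 * s - 1), Nat.choose n j * 2 ^ (2 * m - 1 - n) := by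
        rw [Finset.sum_image (by intro a _ b _ hab; dsimp only at hab; omega)]
    _ ≤ ∑ n ∈ range (2 * m), Nat.choose n j * 2 ^ (2 * m - 1 - n) := by
        apply Finset.sum_le_sum_of_subset
        intro n hn
        simp only [Finset.mem_image, Finset.mem_Icc] at hn
        simp only [Finset.mem_range]
        omega
    _ ≤ 2 ^ (2 * m) := by
        have := key (2 * m - 1)
        rw [show 2 * m - 1 + 1 = 2 * m by omega] at this
        exact this
    _ = 4 ^ m := by rw [show (4:ℕ) = 2 ^ 2 from rfl, ← pow_mul, mul_comm]

lemma trec_le : ∀ k r : ℕ, trec k r ≤ 4 ^ (k - r) := by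
  intro k
  induction k using Nat.strong_induction_on with
  | _ k ih =>
    intro r
    by_cases h : r = 0 ∨ k < r
    · rw [trec_zero k r h]; exact Nat.zero_le _
    push_neg at h
    obtain ⟨hr, hrk⟩ := h
    rcases Nat.lt_or_ge k 2 with hk | hk
    · interval_cases k
      · omega
      · have : r = 1 := by omega
        subst this
        rw [trec_one_one]
        simp
    rw [trec_eq_sum k r hk (by omega) hrk]
    calc ∑ s ∈ Icc 1 k, trec (k - r) s * Nat.choose (2 * s - 1) (r - 1)
        = ∑ s ∈ Icc 1 (k - r), trec (k - r) s * Nat.choose (2 * s - 1) (r - 1) := by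
          refine (Finset.sum_subset ?_ ?_).symm
          · intro x hx; simp only [Finset.mem_Icc] at hx ⊢; omega
          · intro x hx hnx
            simp only [Finset.mem_Icc] at hx hnx
            rw [trec_zero (k - r) x (by omega)]
            ring
      _ ≤ ∑ s ∈ Icc 1 (k - r), 4 ^ (k - r - s) * Nat.choose (2 * s - 1) (r - 1) := by
          refine Finset.sum_le_sum fun s hs => ?_
          exact Nat.mul_le_mul_right _ (ih (k - r) (by omega) s)
      _ = ∑ s ∈ Icc 1 (k - r), Nat.choose (2 * s - 1) (r - 1) * 4 ^ (k - r - s) := by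
          refine Finset.sum_congr rfl fun s _ => mul_comm _ _
      _ ≤ 4 ^ (k - r) := key_ineq (k - r) (r - 1)

lemma trec_one_pos : ∀ k : ℕ, 1 ≤ k → 1 ≤ trec k 1 := by
  intro k
  induction k using Nat.strong_induction_on with
  | _ k ih =>
    intro hk
    rcases Nat.lt_or_ge k 2 with h | h
    · have : k = 1 := by omega
      subst this; rw [trec_one_one]
    rw [trec_eq_sum k 1 h le_rfl (by omega)]
    calc 1 ≤ trec (k - 1) 1 * Nat.choose (2 * 1 - 1) 0 := by
          simpa using ih (k - 1) (by omega) (by omega)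
      _ ≤ ∑ s ∈ Icc 1 k, trec (k - 1) s * Nat.choose (2 * s - 1) 0 :=
          Finset.single_le_sum (f := fun s => trec (k - 1) s * Nat.choose (2 * s - 1) 0)
            (fun i _ => Nat.zero_le _)
            (show (1:ℕ) ∈ Icc 1 k from Finset.mem_Icc.mpr (by omega))

lemma trec_ge_term (k r s : ℕ) (h2 : 2 ≤ k) (h1 : 1 ≤ r) (hrk : r ≤ k)
    (hs1 : 1 ≤ s) (hsk : s ≤ k) :
    trec (k - r) s * Nat.choose (2 * s - 1) (r - 1) ≤ trec k r := by
  rw [trec_eq_sum k r h2 h1 hrk]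
  exact Finset.single_le_sum (f := fun s => trec (k - r) s * Nat.choose (2 * s - 1) (r - 1))
    (fun i _ => Nat.zero_le _)
    (show s ∈ Icc 1 k from Finset.mem_Icc.mpr (by omega))

lemma pump (r k : ℕ) (hr : 1 ≤ r) (hk : 1 ≤ k) :
    trec k r * Nat.choose (2 * r - 1) (r - 1) ≤ trec (k + r) r := by
  have := trec_ge_term (k + r) r r (by omega) hr (by omega) hr (by omega)
  simpa using this

lemma pump_iter (r d : ℕ) (hr : 1 ≤ r) (hd : 1 ≤ d) (hbase : 1 ≤ trec d r) :
    ∀ m : ℕ, Nat.choose (2 * r - 1) (r - 1) ^ m ≤ trec (d + m * r) r := by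
  intro m
  induction m with
  | zero => simpa using hbase
  | succ m ih =>
    have h1 : Nat.choose (2 * r - 1) (r - 1) ^ (m + 1)
        = Nat.choose (2 * r - 1) (r - 1) ^ m * Nat.choose (2 * r - 1) (r - 1) := pow_succ _ _
    rw [h1, show d + (m + 1) * r = (d + m * r) + r by ring]
    calc Nat.choose (2 * r - 1) (r - 1) ^ m * Nat.choose (2 * r - 1) (r - 1)
        ≤ trec (d + m * r) r * Nat.choose (2 * r - 1) (r - 1) :=
          Nat.mul_le_mul_right _ ih
      _ ≤ trec (d + m * r + r) r := pump r (d + m * r) hr (by omega)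

lemma descent : ∀ r : ℕ, 1 ≤ r → ∃ d, 1 ≤ d ∧ d ≤ 3 * r ∧ r ≤ d ∧ 1 ≤ trec d r := by
  intro r
  induction r using Nat.strong_induction_on with
  | _ r ih =>
    intro hr
    rcases Nat.lt_or_ge r 2 with h | h
    · exact ⟨1, le_rfl, by omega, by omega, by rw [show r = 1 by omega, trec_one_one]⟩
    obtain ⟨d', hd'1, hd'2, hd'3, hd'4⟩ := ih ((r + 1) / 2) (by omega) (by omega)
    refine ⟨d' + r, by omega, by omega, by omega, ?_⟩
    calc 1 ≤ trec d' ((r + 1) / 2) * Nat.choose (2 * ((r + 1) / 2) - 1) (r - 1) :=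
          Nat.one_le_iff_ne_zero.mpr (Nat.mul_ne_zero (by omega)
            (Nat.pos_iff_ne_zero.mp (Nat.choose_pos (by omega))))
      _ ≤ trec (d' + r) r := by
          have := trec_ge_term (d' + r) r ((r + 1) / 2) (by omega) (by omega) (by omega)
            (by omega) (by omega)
          rw [show d' + r - r = d' by omega] at this
          exact this

lemma pad (k s : ℕ) (h1 : 1 ≤ s) (hs : s ≤ k) (hk : 1 ≤ k) :
    trec k s ≤ trec (k + 1) 1 := by
  have := trec_ge_term (k + 1) 1 s (by omega) le_rfl (by omega) h1 (by omega)
  simpa using this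

lemma pad_iter (k : ℕ) (hk : 1 ≤ k) : ∀ j, trec k 1 ≤ trec (k + j) 1 := by
  intro j
  induction j with
  | zero => simp
  | succ j ih =>
    calc trec k 1 ≤ trec (k + j) 1 := ih
      _ ≤ trec (k + j + 1) 1 := pad (k + j) 1 le_rfl (by omega) (by omega)

lemma cconst_nonneg (k : ℕ) : 0 ≤ cconst k := by
  refine Finset.sum_nonneg fun r _ => ?_
  positivity

lemma cconst_le (k : ℕ) : cconst k ≤ (k : ℚ) * 4 ^ k := by
  calc cconst k ≤ ∑ _r ∈ Icc 1 k, (4 : ℚ) ^ k := by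
        refine Finset.sum_le_sum fun r hr => ?_
        simp only [Finset.mem_Icc] at hr
        have h1 : (trec k r : ℚ) ≤ (4 : ℚ) ^ k := by
          have := trec_le k r
          have h2 : (4:ℕ) ^ (k - r) ≤ 4 ^ k := Nat.pow_le_pow_right (by norm_num) (by omega)
          exact_mod_cast this.trans h2
        have hr1 : (1 : ℚ) ≤ (r : ℚ) := by exact_mod_cast hr.1
        calc (trec k r : ℚ) / r ≤ (trec k r : ℚ) / 1 := by
              apply div_le_div_of_nonneg_left (by positivity) (by norm_num) hr1
          _ = (trec k r : ℚ) := div_one _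
          _ ≤ 4 ^ k := h1
    _ ≤ (k : ℚ) * 4 ^ k := by
        rw [Finset.sum_const, Nat.card_Icc, Nat.add_sub_cancel, nsmul_eq_mul]

lemma trec_one_le_cconst (k : ℕ) (hk : 1 ≤ k) : (trec k 1 : ℚ) ≤ cconst k := by
  have h := Finset.single_le_sum (f := fun r => (trec k r : ℚ) / r)
    (fun i _ => by positivity)
    (show (1:ℕ) ∈ Icc 1 k from Finset.mem_Icc.mpr (by omega))
  simpa [cconst] using h

lemma binom_lower (r : ℕ) (hr : 1 ≤ r) :
    4 ^ r ≤ 4 * r * Nat.choose (2 * r - 1) (r - 1) := by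
  obtain ⟨q, rfl⟩ : ∃ q, r = q + 1 := ⟨r - 1, by omega⟩
  have h1 : Nat.centralBinom (q + 1) = 2 * Nat.choose (2 * (q + 1) - 1) (q + 1 - 1) := by
    unfold Nat.centralBinom
    have e1 : 2 * (q + 1) = (2 * q + 1) + 1 := by ring
    have e2 : 2 * (q + 1) - 1 = 2 * q + 1 := by omega
    have e3 : q + 1 - 1 = q := by omega
    rw [e1, show 2 * q + 1 + 1 - 1 = 2 * q + 1 by omega, e3,
      Nat.choose_succ_succ' (2 * q + 1) q]
    have h4 : (2 * q + 1).choose (q + 1) = (2 * q + 1).choose q := by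
      have := Nat.choose_symm (n := 2 * q + 1) (k := q + 1) (by omega)
      rw [show 2 * q + 1 - (q + 1) = q by omega] at this
      omega
    omega
  have h5 := Nat.four_pow_le_two_mul_self_mul_centralBinom (q + 1) (by omega)
  calc 4 ^ (q + 1) ≤ 2 * (q + 1) * Nat.centralBinom (q + 1) := h5
    _ = 4 * (q + 1) * Nat.choose (2 * (q + 1) - 1) (q + 1 - 1) := by rw [h1]; ring

lemma cconst_lower (r : ℕ) (hr : 1 ≤ r) : ∃ d, 1 ≤ d ∧ d ≤ 3 * r ∧ r ≤ d ∧
    ∀ k, d + r + 1 ≤ k →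
      ((Nat.choose (2 * r - 1) (r - 1) : ℚ)) ^ ((k - d - 1) / r) ≤ cconst k := by
  obtain ⟨d, hd1, hd2, hd3, hd4⟩ := descent r hr
  refine ⟨d, hd1, hd2, hd3, fun k hk => ?_⟩
  set m := (k - d - 1) / r with hm
  have hmr : m * r ≤ k - d - 1 := Nat.div_mul_le_self _ _
  have h1 : Nat.choose (2 * r - 1) (r - 1) ^ m ≤ trec (d + m * r) r :=
    pump_iter r d hr hd1 hd4 m
  have h2 : trec (d + m * r) r ≤ trec (d + m * r + 1) 1 :=
    pad (d + m * r) r hr (by omega) (by omega)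
  have h3 : trec (d + m * r + 1) 1 ≤ trec k 1 := by
    have := pad_iter (d + m * r + 1) (by omega) (k - (d + m * r + 1))
    rw [show d + m * r + 1 + (k - (d + m * r + 1)) = k by omega] at this
    exact this
  have h4 : (trec k 1 : ℚ) ≤ cconst k := trec_one_le_cconst k (by omega)
  have h5 : Nat.choose (2 * r - 1) (r - 1) ^ m ≤ trec k 1 := le_trans h1 (le_trans h2 h3)
  calc ((Nat.choose (2 * r - 1) (r - 1) : ℚ)) ^ m ≤ (trec k 1 : ℚ) := by exact_mod_cast h5
    _ ≤ cconst k := h4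

open Filter Real in
theorem tendsto_rpow_cconst_aux :
    Filter.Tendsto (fun k : ℕ => ((cconst k : ℝ)) ^ ((k : ℝ)⁻¹)) Filter.atTop
      (nhds 4) := by
  have hnat : Tendsto (fun k : ℕ => (k : ℝ)) atTop atTop := tendsto_natCast_atTop_atTop
  have hinv : Tendsto (fun k : ℕ => ((k : ℝ))⁻¹) atTop (nhds 0) :=
    tendsto_inv_atTop_zero.comp hnat
  have hroot : Tendsto (fun k : ℕ => ((k : ℝ)) ^ ((k : ℝ)⁻¹)) atTop (nhds 1) := by
    have := tendsto_rpow_div.comp hnat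
    simpa [Function.comp_def, one_div] using this
  -- 4^(k⁻¹) → 1  (used with r in place of k)
  have hfour : Tendsto (fun r : ℕ => (4 : ℝ) ^ ((r : ℝ)⁻¹)) atTop (nhds 1) := by
    have hc : ContinuousAt (fun y : ℝ => (4 : ℝ) ^ y) 0 :=
      Real.continuousAt_const_rpow (by norm_num)
    have := hc.tendsto.comp hinv
    simpa [Function.comp_def, Real.rpow_zero] using this
  rw [tendsto_order]
  constructor
  · -- lower bound side
    intro a ha
    -- 4 * ((4r)^(1/r))⁻¹ → 4
    have hM : Tendsto (fun r : ℕ => 4 * (((4 : ℝ) * r) ^ ((r : ℝ)⁻¹))⁻¹) atTop (nhds 4) := by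
      have hprod : Tendsto (fun r : ℕ => ((4 : ℝ) * r) ^ ((r : ℝ)⁻¹)) atTop (nhds 1) := by
        have h1 : Tendsto (fun r : ℕ => (4 : ℝ) ^ ((r : ℝ)⁻¹) * (r : ℝ) ^ ((r : ℝ)⁻¹))
            atTop (nhds 1) := by
          have := hfour.mul hroot
          simpa using this
        refine h1.congr' ?_
        filter_upwards [eventually_ge_atTop 1] with r hr
        rw [← Real.mul_rpow (by norm_num) (by positivity)]
      have := (hprod.inv₀ (by norm_num)).const_mul (4 : ℝ)
      simpa using this
    obtain ⟨r, hr1, hra⟩ : ∃ r : ℕ, 1 ≤ r ∧ a < 4 * (((4 : ℝ) * r) ^ ((r : ℝ)⁻¹))⁻¹ := by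
      have := (hM.eventually_const_lt ha).and (eventually_ge_atTop 1)
      obtain ⟨r, h₁, h₂⟩ := this.exists
      exact ⟨r, h₂, h₁⟩
    set B : ℕ := Nat.choose (2 * r - 1) (r - 1) with hBdef
    have hr0 : (0 : ℝ) < r := by exact_mod_cast hr1
    have hrne : ((r : ℝ)) ≠ 0 := ne_of_gt hr0
    have hB1 : (1 : ℝ) ≤ B := by
      have : 0 < B := Nat.choose_pos (by omega)
      exact_mod_cast this
    have hBpos : (0 : ℝ) < B := lt_of_lt_of_le zero_lt_one hB1
    -- B^(1/r) ≥ 4 * ((4r)^(1/r))⁻¹ > a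
    have hL : a < (B : ℝ) ^ ((r : ℝ)⁻¹) := by
      have hBlow : (4 : ℝ) ^ (r : ℕ) / (4 * r) ≤ B := by
        rw [div_le_iff₀ (by positivity)]
        have := binom_lower r hr1
        calc (4 : ℝ) ^ (r : ℕ) ≤ ((4 * r * B : ℕ) : ℝ) := by push_cast; exact_mod_cast this
          _ = (B : ℝ) * (4 * r) := by push_cast; ring
      have step : (4 : ℝ) * (((4 : ℝ) * r) ^ ((r : ℝ)⁻¹))⁻¹ ≤ (B : ℝ) ^ ((r : ℝ)⁻¹) := by
        have h1 : ((4 : ℝ) ^ (r : ℕ) / (4 * r)) ^ ((r : ℝ)⁻¹) ≤ (B : ℝ) ^ ((r : ℝ)⁻¹) :=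
          Real.rpow_le_rpow (by positivity) hBlow (by positivity)
        have h2 : ((4 : ℝ) ^ (r : ℕ) / (4 * r)) ^ ((r : ℝ)⁻¹)
            = 4 * (((4 : ℝ) * r) ^ ((r : ℝ)⁻¹))⁻¹ := by
          rw [Real.div_rpow (by positivity) (by positivity)]
          rw [← Real.rpow_natCast (4 : ℝ) r, ← Real.rpow_mul (by norm_num),
            mul_inv_cancel₀ hrne, Real.rpow_one]
          rw [div_eq_mul_inv]
        rw [h2] at h1
        exact h1
      exact lt_of_lt_of_le hra step
    obtain ⟨d, hd1, hd2, hd3, hd4⟩ := cconst_lower r hr1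
    set D : ℝ := (d : ℝ) + r with hDdef
    -- ψ k = B ^ ((k - D)/(r k)) tendsto B^(1/r)
    have hψ : Tendsto (fun k : ℕ => (B : ℝ) ^ (((k : ℝ) - D) / ((r : ℝ) * k))) atTop
        (nhds ((B : ℝ) ^ ((r : ℝ)⁻¹))) := by
      have hexp : Tendsto (fun k : ℕ => ((k : ℝ) - D) / ((r : ℝ) * k)) atTop
          (nhds ((r : ℝ)⁻¹)) := by
        have h1 : Tendsto (fun k : ℕ => ((1 : ℝ) - D * (k : ℝ)⁻¹) * (r : ℝ)⁻¹) atTop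
            (nhds ((r : ℝ)⁻¹)) := by
          have := ((tendsto_const_nhds (x := (1 : ℝ))).sub (hinv.const_mul D)).mul
            (tendsto_const_nhds (x := ((r : ℝ)⁻¹)))
          simpa using this
        refine h1.congr' ?_
        filter_upwards [eventually_ge_atTop 1] with k hk
        have hk1 : (0 : ℝ) < k := by exact_mod_cast hk
        have hk0 : ((k : ℝ)) ≠ 0 := ne_of_gt hk1
        have e1 : ((k : ℝ) - D) * (k : ℝ)⁻¹ = 1 - D * (k : ℝ)⁻¹ := by
          field_simp
        rw [← e1, div_eq_mul_inv, mul_inv]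
        ring
      have hc : ContinuousAt (fun y : ℝ => (B : ℝ) ^ y) ((r : ℝ)⁻¹) :=
        Real.continuousAt_const_rpow (ne_of_gt hBpos)
      exact hc.tendsto.comp hexp
    have hev1 : ∀ᶠ k : ℕ in atTop, a < (B : ℝ) ^ (((k : ℝ) - D) / ((r : ℝ) * k)) :=
      hψ.eventually_const_lt hL
    have hev2 : ∀ᶠ k : ℕ in atTop,
        (B : ℝ) ^ (((k : ℝ) - D) / ((r : ℝ) * k)) ≤ ((cconst k : ℝ)) ^ ((k : ℝ)⁻¹) := by
      filter_upwards [eventually_ge_atTop (d + r + 1)] with k hk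
      have hk1 : 1 ≤ k := by omega
      have hk0 : (0 : ℝ) < k := by exact_mod_cast hk1
      set m : ℕ := (k - d - 1) / r with hmdef
      have hcc : ((B : ℝ)) ^ (m : ℕ) ≤ (cconst k : ℝ) := by
        have := hd4 k hk
        have : ((B : ℚ)) ^ m ≤ cconst k := this
        exact_mod_cast this
      have hkm : (k : ℝ) - D ≤ (m : ℝ) * r := by
        have he : r * m + (k - d - 1) % r = k - d - 1 := by
          rw [hmdef]; exact Nat.div_add_mod _ _
        have hmod : (k - d - 1) % r < r := Nat.mod_lt _ (by omega)
        have hkb : k ≤ r * m + r + d := by omega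
        have hcast : (k : ℝ) ≤ (r : ℝ) * m + r + d := by exact_mod_cast hkb
        have hcomm : (r : ℝ) * m = (m : ℝ) * r := mul_comm _ _
        rw [hDdef]; linarith
      have step1 : (B : ℝ) ^ (((k : ℝ) - D) / ((r : ℝ) * k)) ≤ (B : ℝ) ^ ((m : ℝ) * (k : ℝ)⁻¹) := by
        apply Real.rpow_le_rpow_of_exponent_le hB1
        rw [div_le_iff₀ (by positivity)]
        have : (m : ℝ) * (k : ℝ)⁻¹ * ((r : ℝ) * k) = (m : ℝ) * r := by
          field_simp
        rw [this]
        exact hkm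
      have step2 : (B : ℝ) ^ ((m : ℝ) * (k : ℝ)⁻¹) ≤ ((cconst k : ℝ)) ^ ((k : ℝ)⁻¹) := by
        rw [Real.rpow_mul (le_of_lt hBpos), Real.rpow_natCast]
        exact Real.rpow_le_rpow (by positivity) hcc (by positivity)
      exact le_trans step1 step2
    filter_upwards [hev1, hev2] with k h1 h2
    exact lt_of_lt_of_le h1 h2
  · -- upper bound side
    intro b hb
    have hg : Tendsto (fun k : ℕ => (4 : ℝ) * ((k : ℝ)) ^ ((k : ℝ)⁻¹)) atTop (nhds 4) := by
      have := hroot.const_mul (4 : ℝ)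
      simpa using this
    have hev1 : ∀ᶠ k : ℕ in atTop, (4 : ℝ) * ((k : ℝ)) ^ ((k : ℝ)⁻¹) < b :=
      hg.eventually_lt_const hb
    have hev2 : ∀ᶠ k : ℕ in atTop,
        ((cconst k : ℝ)) ^ ((k : ℝ)⁻¹) ≤ (4 : ℝ) * ((k : ℝ)) ^ ((k : ℝ)⁻¹) := by
      filter_upwards [eventually_ge_atTop 1] with k hk
      have hk0 : (0 : ℝ) < k := by exact_mod_cast hk
      have hkne : ((k : ℝ)) ≠ 0 := ne_of_gt hk0
      have h0 : (0 : ℝ) ≤ (cconst k : ℝ) := by exact_mod_cast cconst_nonneg k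
      have h1 : (cconst k : ℝ) ≤ (k : ℝ) * 4 ^ (k : ℕ) := by exact_mod_cast cconst_le k
      calc ((cconst k : ℝ)) ^ ((k : ℝ)⁻¹)
          ≤ ((k : ℝ) * 4 ^ (k : ℕ)) ^ ((k : ℝ)⁻¹) :=
            Real.rpow_le_rpow h0 h1 (by positivity)
        _ = ((k : ℝ)) ^ ((k : ℝ)⁻¹) * ((4 : ℝ) ^ (k : ℕ)) ^ ((k : ℝ)⁻¹) :=
            Real.mul_rpow (le_of_lt hk0) (by positivity)
        _ = (4 : ℝ) * ((k : ℝ)) ^ ((k : ℝ)⁻¹) := by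
            rw [← Real.rpow_natCast (4 : ℝ) k, ← Real.rpow_mul (by norm_num),
              mul_inv_cancel₀ hkne, Real.rpow_one, mul_comm]
    filter_upwards [hev1, hev2] with k h1 h2
    exact lt_of_le_of_lt h2 h1

/-- `c(k)^{1/k} → 4` as `k → ∞` (real `k`-th roots). -/
theorem tendsto_rpow_cconst :
    Filter.Tendsto (fun k : ℕ => ((cconst k : ℝ)) ^ ((k : ℝ)⁻¹)) Filter.atTop
      (nhds 4) :=
  tendsto_rpow_cconst_aux
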